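/- arXiv:2505.11554 — 4 statements merged into one kernel-verified Lean document; each statement's English description precedes it below -/
import Mathlib

section
/- (Soundness of Pruning Rule 2.) Let ι be a finite index type of tasks and u : ι → ℕ → ℕ → ℚ a utilization function that is nonnegative and antitone in each resource argument (i.e., if b ≤ b' and k ≤ k' then u i b' k' ≤ u i b k). Let B̄, K̄ be the remaining memory bandwidth and cache partitions and M̄ the number of remaining cores. If ∑ i, u i B̄ K̄ > M̄, then for every task assignment f : ι → Fin M̄ and every per-core resource allocation b, k : Fin M̄ → ℕ satisfying ∑ m, b m ≤ B̄ and ∑ m, k m ≤ K̄, there exists a core m with ∑ i with f i = m, u i (b m) (k m) > 1; in other words, no completion of the partial solution makes every core EDF-schedulable. -/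
/-- Soundness of Pruning Rule 2: if the total utilization of the remaining tasks,
computed as if every core received all remaining resources, exceeds the number of
remaining cores, then no completion of the partial solution makes every core
EDF-schedulable. -/
theorem stmt_1 {ι : Type*} [Fintype ι] (u : ι → ℕ → ℕ → ℚ)
    (hnn : ∀ i b k, 0 ≤ u i b k)
    (hanti : ∀ i b b' k k', b ≤ b' → k ≤ k' → u i b' k' ≤ u i b k)
    (Brem Krem Mrem : ℕ) (htot : (Mrem : ℚ) < ∑ i, u i Brem Krem)
    (f : ι → Fin Mrem) (b k : Fin Mrem → ℕ)
    (hb : ∑ m, b m ≤ Brem) (hk : ∑ m, k m ≤ Krem) :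
    ∃ m : Fin Mrem,
      1 < ∑ i ∈ Finset.univ.filter (fun i => f i = m), u i (b m) (k m) := by
  by_contra h
  push_neg at h
  have key : ∑ i, u i Brem Krem ≤ (Mrem : ℚ) := by
    calc ∑ i, u i Brem Krem
        = ∑ m : Fin Mrem, ∑ i ∈ Finset.univ.filter (fun i => f i = m), u i Brem Krem := by
          rw [Finset.sum_fiberwise]
      _ ≤ ∑ m : Fin Mrem, ∑ i ∈ Finset.univ.filter (fun i => f i = m), u i (b m) (k m) := by
          refine Finset.sum_le_sum fun m _ => Finset.sum_le_sum fun i _ => ?_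
          exact hanti i (b m) Brem (k m) Krem
            (le_trans (Finset.single_le_sum (fun m _ => Nat.zero_le _) (Finset.mem_univ m)) hb)
            (le_trans (Finset.single_le_sum (fun m _ => Nat.zero_le _) (Finset.mem_univ m)) hk)
      _ ≤ ∑ _m : Fin Mrem, (1 : ℚ) := Finset.sum_le_sum fun m _ => h m
      _ = (Mrem : ℚ) := by simp
  exact absurd htot (not_lt.mpr key)
end

section
/- (Encoding correctness of the 0-1 ILP.) Fix natural numbers N, M ≥ 1, B ≥ 1, K ≥ 1 and a utilization function U : Fin N → ℕ → ℕ → ℚ. There exist functions x : Fin N → Fin M → ℤ, y : Fin B → Fin M → ℤ, z : Fin K → Fin M → ℤ, and α : Fin N → Fin B → Fin K → Fin M → ℤ, all taking values in {0, 1}, satisfying: (i) for every task i, ∑ m, x i m = 1; (ii) for every core m, ∑ b, y b m = 1 and ∑ k, z k m = 1 (where b ranges over 1..B and k over 1..K); (iii) ∑ m ∑ b, b · (y b m) ≤ B and ∑ m ∑ k, k · (z k m) ≤ K; (iv) for all i, b, k, m: 3·(α i b k m) ≤ x i m + y b m + z k m and α i b k m ≥ x i m + y b m + z k m − 2; and (v)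 for every core m, ∑ i ∑ b ∑ k, (α i b k m) · U i b k ≤ 1 — if and only if there exist a task assignment f : Fin N → Fin M and per-core allocations bw, ca : Fin M → ℕ with 1 ≤ bw m ≤ B and 1 ≤ ca m ≤ K for every m, ∑ m, bw m ≤ B, ∑ m, ca m ≤ K, and for every core m, ∑ i with f i = m, U i (bw m) (ca m) ≤ 1. -/
lemma exists_unique_one {n : ℕ} (g : Fin n → ℤ) (h01 : ∀ j, g j = 0 ∨ g j = 1)
    (hs : ∑ j, g j = 1) : ∃ j, g j = 1 ∧ ∀ j', j' ≠ j → g j' = 0 := by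
  obtain ⟨j, _, hj⟩ := Finset.exists_ne_zero_of_sum_ne_zero (s := Finset.univ) (f := g)
    (by rw [hs]; norm_num)
  have hj1 : g j = 1 := (h01 j).resolve_left hj
  refine ⟨j, hj1, ?_⟩
  have hrest : ∑ j' ∈ Finset.univ.erase j, g j' = 0 := by
    have := Finset.add_sum_erase Finset.univ g (Finset.mem_univ j)
    omega
  intro j' hj'
  exact (Finset.sum_eq_zero_iff_of_nonneg (fun i _ => by rcases h01 i with h|h <;> omega)).1
    hrest j' (Finset.mem_erase.2 ⟨hj', Finset.mem_univ j'⟩)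

/-- Encoding correctness of the 0-1 ILP: there exist 0-1 variables satisfying the
ILP constraints (1)-(10) iff there exist a task assignment and per-core resource
allocations (at least one partition of each resource per core, within the totals)
making every core EDF-schedulable.  The index `b : Fin B` encodes the allocation
of `b+1` memory bandwidth partitions (ranging over `1..B`), and similarly for
`k : Fin K`. -/
theorem stmt_5 (N M B K : ℕ) (hM : 1 ≤ M) (hB : 1 ≤ B) (hK : 1 ≤ K)
    (U : Fin N → ℕ → ℕ → ℚ) :
    (∃ (x : Fin N → Fin M → ℤ) (y : Fin B → Fin M → ℤ) (z : Fin K → Fin M → ℤ)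
        (a : Fin N → Fin B → Fin K → Fin M → ℤ),
      (∀ i m, x i m = 0 ∨ x i m = 1) ∧
      (∀ b m, y b m = 0 ∨ y b m = 1) ∧
      (∀ k m, z k m = 0 ∨ z k m = 1) ∧
      (∀ i b k m, a i b k m = 0 ∨ a i b k m = 1) ∧
      (∀ i, ∑ m, x i m = 1) ∧
      (∀ m, ∑ b, y b m = 1) ∧
      (∀ m, ∑ k, z k m = 1) ∧
      (∑ m, ∑ b : Fin B, ((b : ℕ) + 1 : ℤ) * y b m ≤ (B : ℤ)) ∧
      (∑ m, ∑ k : Fin K, ((k : ℕ) + 1 : ℤ) * z k m ≤ (K : ℤ)) ∧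
      (∀ i b k m, 3 * a i b k m ≤ x i m + y b m + z k m ∧
        x i m + y b m + z k m - 2 ≤ a i b k m) ∧
      (∀ m, ∑ i, ∑ b : Fin B, ∑ k : Fin K,
        (a i b k m : ℚ) * U i ((b : ℕ) + 1) ((k : ℕ) + 1) ≤ 1)) ↔
    (∃ (f : Fin N → Fin M) (bw ca : Fin M → ℕ),
      (∀ m, 1 ≤ bw m ∧ bw m ≤ B) ∧
      (∀ m, 1 ≤ ca m ∧ ca m ≤ K) ∧
      (∑ m, bw m ≤ B) ∧
      (∑ m, ca m ≤ K) ∧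
      (∀ m, ∑ i ∈ Finset.univ.filter (fun i => f i = m),
        U i (bw m) (ca m) ≤ 1)) := by
  constructor
  · rintro ⟨x, y, z, a, hx01, hy01, hz01, ha01, hxs, hys, hzs, hyB, hzK, hcc, hut⟩
    choose f hf1 hf2 using fun i => exists_unique_one (x i) (hx01 i) (hxs i)
    choose bs hbs1 hbs2 using fun m => exists_unique_one (fun b => y b m) (fun b => hy01 b m) (hys m)
    choose ks hks1 hks2 using fun m => exists_unique_one (fun k => z k m) (fun k => hz01 k m) (hzs m)
    refine ⟨f, fun m => (bs m : ℕ) + 1, fun m => (ks m : ℕ) + 1,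
      fun m => ⟨Nat.le_add_left 1 _, (bs m).2⟩, fun m => ⟨Nat.le_add_left 1 _, (ks m).2⟩, ?_, ?_, ?_⟩
    · have hb : ∀ m, ∑ b : Fin B, ((b : ℕ) + 1 : ℤ) * y b m = (bs m : ℕ) + 1 := by
        intro m
        rw [Finset.sum_eq_single (bs m)]
        · rw [hbs1 m]; ring
        · intro b _ hb; rw [hbs2 m b hb]; ring
        · intro h; exact absurd (Finset.mem_univ _) h
      have := hyB
      rw [Finset.sum_congr rfl (fun m _ => hb m)] at this
      exact_mod_cast this
    · have hk : ∀ m, ∑ k : Fin K, ((k : ℕ) + 1 : ℤ) * z k m = (ks m : ℕ) + 1 := by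
        intro m
        rw [Finset.sum_eq_single (ks m)]
        · rw [hks1 m]; ring
        · intro k _ hk; rw [hks2 m k hk]; ring
        · intro h; exact absurd (Finset.mem_univ _) h
      have := hzK
      rw [Finset.sum_congr rfl (fun m _ => hk m)] at this
      exact_mod_cast this
    · intro m
      have hxiff : ∀ i, x i m = if f i = m then 1 else 0 := by
        intro i
        split_ifs with h
        · subst h; exact hf1 i
        · exact hf2 i m (fun hc => h hc.symm)
      have hyiff : ∀ b, y b m = if b = bs m then 1 else 0 := by
        intro b; split_ifs with h
        · subst h; exact hbs1 m
        · exact hbs2 m b h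
      have hziff : ∀ k, z k m = if k = ks m then 1 else 0 := by
        intro k; split_ifs with h
        · subst h; exact hks1 m
        · exact hks2 m k h
      have haind : ∀ i b k, a i b k m = if f i = m ∧ b = bs m ∧ k = ks m then 1 else 0 := by
        intro i b k
        have h1 := (hcc i b k m).1
        have h2 := (hcc i b k m).2
        rw [hxiff, hyiff, hziff] at h1 h2
        rcases ha01 i b k m with h|h <;> split_ifs at h1 h2 ⊢ <;> omega
      have := hut m
      rw [Finset.sum_congr rfl (fun i _ => Finset.sum_congr rfl (fun b _ =>
        Finset.sum_congr rfl (fun k _ => by rw [haind i b k])))] at this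
      calc ∑ i ∈ Finset.univ.filter (fun i => f i = m), U i ((bs m : ℕ) + 1) ((ks m : ℕ) + 1)
          = ∑ i, ∑ b : Fin B, ∑ k : Fin K,
            ((if f i = m ∧ b = bs m ∧ k = ks m then (1:ℤ) else 0 : ℤ) : ℚ)
              * U i ((b : ℕ) + 1) ((k : ℕ) + 1) := by
            rw [Finset.sum_filter]
            refine Finset.sum_congr rfl (fun i _ => ?_)
            by_cases h : f i = m <;>
              simp [h, ite_and, Finset.sum_ite_eq']
        _ ≤ 1 := this
  · rintro ⟨f, bw, ca, hbw, hca, hbwB, hcaK, hsched⟩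
    have hb0 : ∀ m, bw m - 1 < B := fun m => by have := hbw m; omega
    have hk0 : ∀ m, ca m - 1 < K := fun m => by have := hca m; omega
    set b0 : Fin M → Fin B := fun m => ⟨bw m - 1, hb0 m⟩ with hb0def
    set k0 : Fin M → Fin K := fun m => ⟨ca m - 1, hk0 m⟩ with hk0def
    have hb0v : ∀ m, ((b0 m : ℕ) + 1) = bw m := fun m => by
      have := (hbw m).1; simp [hb0def]; omega
    have hk0v : ∀ m, ((k0 m : ℕ) + 1) = ca m := fun m => by
      have := (hca m).1; simp [hk0def]; omega
    refine ⟨fun i m => if f i = m then 1 else 0,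
      fun b m => if b = b0 m then 1 else 0,
      fun k m => if k = k0 m then 1 else 0,
      fun i b k m => if f i = m ∧ b = b0 m ∧ k = k0 m then 1 else 0,
      fun i m => by dsimp only; split_ifs <;> simp,
      fun b m => by dsimp only; split_ifs <;> simp,
      fun k m => by dsimp only; split_ifs <;> simp,
      fun i b k m => by dsimp only; split_ifs <;> simp,
      fun i => by simp [Finset.sum_ite_eq],
      fun m => by simp [Finset.sum_ite_eq'],
      fun m => by simp [Finset.sum_ite_eq'],
      ?_, ?_, ?_, ?_⟩
    · calc ∑ m, ∑ b : Fin B, ((b : ℕ) + 1 : ℤ) * (if b = b0 m then 1 else 0)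
          = ∑ m, ((bw m : ℕ) : ℤ) := by
            refine Finset.sum_congr rfl (fun m _ => ?_)
            simp [mul_ite, Finset.sum_ite_eq']
            exact_mod_cast congrArg (Nat.cast : ℕ → ℤ) (hb0v m)
        _ ≤ (B : ℤ) := by exact_mod_cast hbwB
    · calc ∑ m, ∑ k : Fin K, ((k : ℕ) + 1 : ℤ) * (if k = k0 m then 1 else 0)
          = ∑ m, ((ca m : ℕ) : ℤ) := by
            refine Finset.sum_congr rfl (fun m _ => ?_)
            simp [mul_ite, Finset.sum_ite_eq']
            exact_mod_cast congrArg (Nat.cast : ℕ → ℤ) (hk0v m)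
        _ ≤ (K : ℤ) := by exact_mod_cast hcaK
    · intro i b k m
      constructor <;> (dsimp only; split_ifs <;> simp_all <;> omega)
    · intro m
      have key : ∑ i, ∑ b : Fin B, ∑ k : Fin K,
          ((if f i = m ∧ b = b0 m ∧ k = k0 m then (1:ℤ) else 0 : ℤ) : ℚ)
            * U i ((b : ℕ) + 1) ((k : ℕ) + 1)
          = ∑ i ∈ Finset.univ.filter (fun i => f i = m), U i (bw m) (ca m) := by
        rw [Finset.sum_filter]
        refine Finset.sum_congr rfl (fun i _ => ?_)
        by_cases h : f i = m <;>
          simp [h, ite_and, Finset.sum_ite_eq', hb0v, hk0v]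
      rw [key]
      exact hsched m
end

section
/- (Correctness of backtracking: an optimal subset is attained.) Let n be a natural number, w : Fin n → ℕ item weights, v : Fin n → ℚ nonnegative item values, γ a capacity, and dp defined by dp 0 j = 0 and dp (i+1) j = dp i j if w i > j, dp (i+1) j = max (dp i j) (dp i (j − w i) + v i) if w i ≤ j. Then there exists a subset S ⊆ Fin n with ∑ s ∈ S, w s ≤ γ and ∑ s ∈ S, v s = dp n γ; moreover every subset S' ⊆ Fin n with ∑ s ∈ S', w s ≤ γ satisfies ∑ s ∈ S', v s ≤ dp n γ. -/
/-- Correctness of backtracking: an optimal subset is attained.  There exists a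
subset `S ⊆ Fin n` with total weight at most `γ` whose total value equals
`dp n γ`, and every subset with total weight at most `γ` has total value at most
`dp n γ`. -/
theorem stmt_8 (n : ℕ) (w : Fin n → ℕ) (v : Fin n → ℚ) (hv : ∀ i, 0 ≤ v i)
    (γ : ℕ) (dp : ℕ → ℕ → ℚ)
    (hdp0 : ∀ j, dp 0 j = 0)
    (hdp1 : ∀ (i : Fin n) (j : ℕ), j < w i → dp ((i : ℕ) + 1) j = dp i j)
    (hdp2 : ∀ (i : Fin n) (j : ℕ), w i ≤ j →
      dp ((i : ℕ) + 1) j = max (dp i j) (dp i (j - w i) + v i)) :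
    (∃ S : Finset (Fin n), (∑ s ∈ S, w s ≤ γ) ∧ (∑ s ∈ S, v s = dp n γ)) ∧
    (∀ S' : Finset (Fin n), (∑ s ∈ S', w s ≤ γ) → ∑ s ∈ S', v s ≤ dp n γ) := by
  have key : ∀ i, i ≤ n → ∀ j,
      (∃ S : Finset (Fin n), (∀ s ∈ S, (s : ℕ) < i) ∧ (∑ s ∈ S, w s ≤ j) ∧
        (∑ s ∈ S, v s = dp i j)) ∧
      (∀ S : Finset (Fin n), (∀ s ∈ S, (s : ℕ) < i) → (∑ s ∈ S, w s ≤ j) →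
        ∑ s ∈ S, v s ≤ dp i j) := by
    intro i
    induction i with
    | zero =>
      intro _ j
      constructor
      · exact ⟨∅, by simp [hdp0]⟩
      · intro S hS _
        have : S = ∅ := by
          ext s; simp only [Finset.notMem_empty, iff_false]
          intro hs; exact absurd (hS s hs) (by omega)
        simp [this, hdp0]
    | succ i ih =>
      intro hi j
      have hin : i < n := hi
      have ihj := ih (le_of_lt hin)
      set fi : Fin n := ⟨i, hin⟩
      by_cases hw : w fi ≤ j
      · -- dp (i+1) j = max ...
        have hdp : dp (i + 1) j = max (dp i j) (dp i (j - w fi) + v fi) := hdp2 fi j hw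
        constructor
        · rcases max_cases (dp i j) (dp i (j - w fi) + v fi) with ⟨hmax, _⟩ | ⟨hmax, _⟩
          · obtain ⟨S, hS1, hS2, hS3⟩ := (ihj j).1
            exact ⟨S, fun s hs => Nat.lt_succ_of_lt (hS1 s hs), hS2, by rw [hdp, hmax, hS3]⟩
          · obtain ⟨S, hS1, hS2, hS3⟩ := (ihj (j - w fi)).1
            have hfi : fi ∉ S := fun h => absurd (hS1 fi h) (by simp [fi])
            refine ⟨insert fi S, ?_, ?_, ?_⟩
            · intro s hs
              rcases Finset.mem_insert.1 hs with rfl | hs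
              · exact Nat.lt_succ_self i
              · exact Nat.lt_succ_of_lt (hS1 s hs)
            · rw [Finset.sum_insert hfi]; omega
            · rw [Finset.sum_insert hfi, hdp, hmax, hS3]; ring
        · intro S hS hSw
          rw [hdp]
          by_cases hfi : fi ∈ S
          · have hwle : w fi ≤ ∑ s ∈ S, w s := Finset.single_le_sum (fun _ _ => Nat.zero_le _) hfi
            have hsplitw : ∑ s ∈ S, w s = w fi + ∑ s ∈ S.erase fi, w s :=
              (Finset.add_sum_erase _ _ hfi).symm
            have herase : ∀ s ∈ S.erase fi, (s : ℕ) < i := by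
              intro s hs
              have h1 := hS s (Finset.mem_of_mem_erase hs)
              have h2 : s ≠ fi := Finset.ne_of_mem_erase hs
              have : (s : ℕ) ≠ i := fun h => h2 (Fin.ext h)
              omega
            have hwle' : ∑ s ∈ S.erase fi, w s ≤ j - w fi := by omega
            have hle := (ihj (j - w fi)).2 (S.erase fi) herase hwle'
            calc ∑ s ∈ S, v s = ∑ s ∈ S.erase fi, v s + v fi := by
                    rw [← Finset.add_sum_erase _ _ hfi]; ring
              _ ≤ dp i (j - w fi) + v fi := by linarith
              _ ≤ _ := le_max_right _ _
          · have : ∀ s ∈ S, (s : ℕ) < i := by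
              intro s hs
              have h1 := hS s hs
              have : (s : ℕ) ≠ i := fun h => hfi (by rwa [show fi = s from (Fin.ext h.symm)] )
              omega
            exact le_trans ((ihj j).2 S this hSw) (le_max_left _ _)
      · have hdp : dp (i + 1) j = dp i j := hdp1 fi j (by omega)
        constructor
        · obtain ⟨S, hS1, hS2, hS3⟩ := (ihj j).1
          exact ⟨S, fun s hs => Nat.lt_succ_of_lt (hS1 s hs), hS2, by rw [hdp, hS3]⟩
        · intro S hS hSw
          rw [hdp]
          have hfi : fi ∉ S := by
            intro h
            have : w fi ≤ ∑ s ∈ S, w s := Finset.single_le_sum (fun _ _ => Nat.zero_le _) h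
            omega
          refine (ihj j).2 S ?_ hSw
          intro s hs
          have h1 := hS s hs
          have : (s : ℕ) ≠ i := fun h => hfi (by rwa [show fi = s from (Fin.ext h.symm)])
          omega
  obtain ⟨⟨S, _, hS2, hS3⟩, hub⟩ := key n le_rfl γ
  exact ⟨⟨S, hS2, hS3⟩, fun S' h => hub S' (fun s _ => s.isLt) h⟩
end

section
/- (Inner-layer guarantee: the selected tasks maximize reference utilization and are EDF-schedulable.) Let ι be a finite index type of tasks, u : ι → ℚ the nonnegative true utilizations under the candidate resource allocation, v : ι → ℚ the nonnegative reference utilizations, γ a positive natural number, and define scaled weights w i = ⌈u i · γ⌉. Then there exists a subset S* ⊆ ι that maximizes ∑ i ∈ S, v i among all subsets S with ∑ i ∈ S, w i ≤ γ, and every such maximizer S* satisfies ∑ i ∈ S*, u i ≤ 1, i.e., the selected tasks are EDF-schedulable on the core. -/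
/-- Inner-layer guarantee: among all subsets whose total scaled weight
`∑ ⌈u i * γ⌉` is at most the scaled capacity `γ`, a subset maximizing the total
reference utilization `∑ v i` exists, and every such maximizer has total true
utilization at most 1, i.e., is EDF-schedulable on the core. -/
theorem stmt_10 {ι : Type*} [Fintype ι] (u v : ι → ℚ)
    (hu : ∀ i, 0 ≤ u i) (hv : ∀ i, 0 ≤ v i)
    (γ : ℕ) (hγ : 0 < γ) (w : ι → ℤ) (hw : ∀ i, w i = ⌈u i * (γ : ℚ)⌉) :
    (∃ S : Finset ι, (∑ i ∈ S, w i ≤ (γ : ℤ)) ∧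
      ∀ S' : Finset ι, (∑ i ∈ S', w i ≤ (γ : ℤ)) →
        ∑ i ∈ S', v i ≤ ∑ i ∈ S, v i) ∧
    (∀ S : Finset ι, (∑ i ∈ S, w i ≤ (γ : ℤ)) →
      (∀ S' : Finset ι, (∑ i ∈ S', w i ≤ (γ : ℤ)) →
        ∑ i ∈ S', v i ≤ ∑ i ∈ S, v i) →
      ∑ i ∈ S, u i ≤ 1) := by
  have hγQ : (0:ℚ) < (γ:ℚ) := by exact_mod_cast hγ
  constructor
  · have hne : (Finset.univ.powerset.filter
        (fun S : Finset ι => ∑ i ∈ S, w i ≤ (γ:ℤ))).Nonempty :=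
      ⟨∅, by simp [Int.ofNat_le.mpr hγ.le]⟩
    obtain ⟨S, hS, hmax⟩ :=
      Finset.exists_max_image _ (fun S => ∑ i ∈ S, v i) hne
    simp only [Finset.mem_filter] at hS
    exact ⟨S, hS.2, fun S' hS' => hmax S' (by simp [hS'])⟩
  · intro S hS _
    have h1 : ∑ i ∈ S, u i ≤ ∑ i ∈ S, ((w i : ℚ) / γ) := by
      refine Finset.sum_le_sum fun i _ => ?_
      rw [hw i, le_div_iff₀ hγQ]
      exact_mod_cast Int.le_ceil (u i * γ)
    calc ∑ i ∈ S, u i ≤ ∑ i ∈ S, ((w i : ℚ) / γ) := h1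
      _ = (∑ i ∈ S, (w i : ℚ)) / γ := by rw [Finset.sum_div]
      _ ≤ 1 := by
          rw [div_le_one hγQ]
          exact_mod_cast hS
end
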